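/- Let μ be a probability measure, f bounded measurable symmetric, and set Q(λ, ν) = ∬ f dλ dν. Suppose Q(μ, μ) = 0 and Q(μₜ, μₜ) ≥ 0 for all probability measures μₜ = (1−t)μ + tν, 0 ≤ t ≤ 1, where ν is any probability measure absolutely continuous with respect to μ. Then the set {x : ∫ f(x,y) μ(dy) < 0} has μ-measure 0 or the set {x : ∫ f(x,y) μ(dy) > 0} has μ-measure 0. -/

import Mathlib

open MeasureTheory Function ENNReal

theorem stmt_7 {Ω : Type*} [MeasurableSpace Ω]
    (μ : Measure Ω) [IsProbabilityMeasure μ]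
    (f : Ω → Ω → ℝ) (hmeas : Measurable (Function.uncurry f))
    (hbdd : ∃ C : ℝ, ∀ x y, |f x y| ≤ C)
    (hsymm : ∀ x y, f x y = f y x)
    (hQ0 : ∫ x, ∫ y, f x y ∂μ ∂μ = 0)
    (hQt : ∀ (ν : Measure Ω), IsProbabilityMeasure ν → ν ≪ μ →
      ∀ t : ℝ, 0 ≤ t → t ≤ 1 →
        0 ≤ ∫ x, ∫ y, f x y
              ∂(ENNReal.ofReal (1 - t) • μ + ENNReal.ofReal t • ν)
              ∂(ENNReal.ofReal (1 - t) • μ + ENNReal.ofReal t • ν)) :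
    μ {x | ∫ y, f x y ∂μ < 0} = 0 ∨ μ {x | 0 < ∫ y, f x y ∂μ} = 0 := by
  classical
  obtain ⟨C₀, hC₀⟩ := hbdd
  set C := |C₀| with hCdef
  have hC : ∀ x y, |f x y| ≤ C := fun x y => (hC₀ x y).trans (le_abs_self _)
  have hC0 : 0 ≤ C := abs_nonneg _
  left
  set g : Ω → ℝ := fun x => ∫ y, f x y ∂μ with hgdef
  show μ {x | g x < 0} = 0
  by_contra hb0
  have hsm : StronglyMeasurable (uncurry f) := hmeas.stronglyMeasurable
  have hg_sm : StronglyMeasurable g := hsm.integral_prod_right'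
  have hB : MeasurableSet {x | g x < 0} :=
    measurableSet_lt hg_sm.measurable measurable_const
  set B := {x | g x < 0} with hBdef
  set b := μ B with hbdef
  have hbne : b ≠ 0 := hb0
  have hbtop : b ≠ ∞ := measure_ne_top μ B
  set ν : Measure Ω := b⁻¹ • μ.restrict B with hνdef
  haveI hνp : IsProbabilityMeasure ν := by
    constructor
    simp [hνdef, Measure.smul_apply, smul_eq_mul,
      ENNReal.inv_mul_cancel hbne hbtop]
    exact ENNReal.inv_mul_cancel hbne hbtop
  have hac : ν ≪ μ := by
    intro s hs
    have h1 : μ.restrict B s = 0 :=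
      le_antisymm (le_trans (Measure.restrict_le_self s) hs.le) zero_le
    simp [hνdef, Measure.smul_apply, h1]
  -- integrability of f x w.r.t. any finite measure
  have hfx : ∀ (ρ : Measure Ω), IsFiniteMeasure ρ → ∀ x, Integrable (f x) ρ := by
    intro ρ hρ x
    haveI := hρ
    exact (integrable_const C).mono' hmeas.of_uncurry_left.aestronglyMeasurable
      (Filter.Eventually.of_forall fun y => by
        rw [Real.norm_eq_abs]; exact hC x y)
  set gν : Ω → ℝ := fun x => ∫ y, f x y ∂ν with hgνdef
  have hgν_sm : StronglyMeasurable gν := hsm.integral_prod_right'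
  -- bounds
  have hbound : ∀ (ρ : Measure Ω), IsProbabilityMeasure ρ →
      ∀ x, ‖∫ y, f x y ∂ρ‖ ≤ C := by
    intro ρ hρ x
    haveI := hρ
    calc ‖∫ y, f x y ∂ρ‖ ≤ C * (ρ Set.univ).toReal :=
          norm_integral_le_of_norm_le_const
            (Filter.Eventually.of_forall fun y => by
              rw [Real.norm_eq_abs]; exact hC x y)
      _ = C := by simp
  -- integrability of g, gν w.r.t. any finite measure
  have hgint : ∀ (ρ : Measure Ω), IsFiniteMeasure ρ → Integrable g ρ := by
    intro ρ hρ
    haveI := hρ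
    exact (integrable_const C).mono' hg_sm.aestronglyMeasurable
      (Filter.Eventually.of_forall fun x => hbound μ inferInstance x)
  have hgνint : ∀ (ρ : Measure Ω), IsFiniteMeasure ρ → Integrable gν ρ := by
    intro ρ hρ
    haveI := hρ
    exact (integrable_const C).mono' hgν_sm.aestronglyMeasurable
      (Filter.Eventually.of_forall fun x => hbound ν inferInstance x)
  -- Fubini/symmetry: ∫ gν ∂μ = ∫ g ∂ν
  have hswap : ∫ x, gν x ∂μ = ∫ x, g x ∂ν := by
    have h1 : ∀ x, gν x = ∫ y, f y x ∂ν := by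
      intro x; simp only [hgνdef]
      exact integral_congr_ae (Filter.Eventually.of_forall fun y => hsymm x y)
    have hintp : Integrable (uncurry fun x y => f y x) (μ.prod ν) := by
      refine (integrable_const C).mono'
        ((hmeas.comp measurable_swap).aestronglyMeasurable)
        (Filter.Eventually.of_forall ?_)
      rintro ⟨x, y⟩
      rw [Real.norm_eq_abs]; exact hC y x
    calc ∫ x, gν x ∂μ = ∫ x, ∫ y, f y x ∂ν ∂μ := by
          exact integral_congr_ae (Filter.Eventually.of_forall h1)
      _ = ∫ y, ∫ x, f y x ∂μ ∂ν := integral_integral_swap hintp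
      _ = ∫ x, g x ∂ν := rfl
  -- ∫ g ∂ν < 0
  have hSneg : ∫ x, g x ∂ν < 0 := by
    have hIB : IntegrableOn g B μ := (hgint μ inferInstance).integrableOn
    have hpos : 0 < ∫ x in B, (fun x => -g x) x ∂μ := by
      rw [setIntegral_pos_iff_support_of_nonneg_ae
        (((ae_restrict_mem hB).mono fun x hx => (neg_pos.2 hx).le)) hIB.neg]
      have hsub : B ⊆ Function.support (fun x => -g x) := by
        intro x hx
        simp only [Function.mem_support, ne_eq, neg_eq_zero]
        exact ne_of_lt hx
      have : Function.support (fun x => -g x) ∩ B = B :=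
        Set.inter_eq_self_of_subset_right hsub
      rw [this]
      exact lt_of_le_of_ne zero_le (Ne.symm hbne)
    have hBneg : ∫ x in B, g x ∂μ < 0 := by
      rw [integral_neg] at hpos; linarith
    have hcoef : 0 < (b⁻¹).toReal :=
      ENNReal.toReal_pos (ENNReal.inv_ne_zero.2 hbtop) (ENNReal.inv_ne_top.2 hbne)
    rw [hνdef, integral_smul_measure]
    have : ∫ x, g x ∂(μ.restrict B) = ∫ x in B, g x ∂μ := rfl
    rw [this, smul_eq_mul]
    exact mul_neg_of_pos_of_neg hcoef hBneg
  -- choose t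
  set S : ℝ := ∫ x, g x ∂ν with hSdef
  set D : ℝ := ∫ x, gν x ∂ν with hDdef
  set c : ℝ := -S with hcdef
  have hc : 0 < c := by simp [hcdef]; linarith
  set M : ℝ := |D| with hMdef
  have hM : 0 ≤ M := abs_nonneg _
  set t : ℝ := c / (2 * (M + c)) with htdef
  have hden : 0 < 2 * (M + c) := by linarith
  have ht0 : 0 < t := div_pos hc hden
  have thalf : t ≤ 1 / 2 := by
    rw [htdef, div_le_div_iff₀ hden (by norm_num)]
    linarith
  have ht1 : t ≤ 1 := le_trans thalf (by norm_num)
  -- expansion of Q(μ_t, μ_t)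
  set μt : Measure Ω := ENNReal.ofReal (1 - t) • μ + ENNReal.ofReal t • ν with hμtdef
  have hne1 : ENNReal.ofReal (1 - t) ≠ ∞ := ENNReal.ofReal_ne_top
  have hne2 : ENNReal.ofReal t ≠ ∞ := ENNReal.ofReal_ne_top
  have htr1 : (ENNReal.ofReal (1 - t)).toReal = 1 - t :=
    ENNReal.toReal_ofReal (by linarith)
  have htr2 : (ENNReal.ofReal t).toReal = t := ENNReal.toReal_ofReal ht0.le
  have hinner : ∀ x, ∫ y, f x y ∂μt = (1 - t) * g x + t * gν x := by
    intro x
    rw [hμtdef, integral_add_measure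
        ((hfx μ inferInstance x).smul_measure hne1)
        ((hfx ν inferInstance x).smul_measure hne2),
      integral_smul_measure, integral_smul_measure, htr1, htr2,
      smul_eq_mul, smul_eq_mul]
  have hexp : ∫ x, ∫ y, f x y ∂μt ∂μt
      = (1 - t) * ((1 - t) * (∫ x, g x ∂μ) + t * (∫ x, gν x ∂μ))
        + t * ((1 - t) * S + t * D) := by
    have h1 : (fun x => ∫ y, f x y ∂μt) = fun x => (1 - t) * g x + t * gν x :=
      funext hinner
    rw [h1]
    have hintμ : Integrable (fun x => (1 - t) * g x + t * gν x) μ :=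
      ((hgint μ inferInstance).const_mul _).add
        ((hgνint μ inferInstance).const_mul _)
    have hintν : Integrable (fun x => (1 - t) * g x + t * gν x) ν :=
      ((hgint ν inferInstance).const_mul _).add
        ((hgνint ν inferInstance).const_mul _)
    rw [hμtdef, integral_add_measure (hintμ.smul_measure hne1)
        (hintν.smul_measure hne2),
      integral_smul_measure, integral_smul_measure, htr1, htr2,
      smul_eq_mul, smul_eq_mul,
      integral_add ((hgint μ inferInstance).const_mul _)
        ((hgνint μ inferInstance).const_mul _),
      integral_add ((hgint ν inferInstance).const_mul _)
        ((hgνint ν inferInstance).const_mul _),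
      integral_const_mul, integral_const_mul, integral_const_mul,
      integral_const_mul]
  have hQ0' : ∫ x, g x ∂μ = 0 := hQ0
  have hkey := hQt ν hνp hac t ht0.le ht1
  rw [← hμtdef] at hkey
  rw [hexp, hQ0', hswap] at hkey
  -- hkey : 0 ≤ (1-t) * ((1-t)*0 + t*S) + t*((1-t)*S + t*D)
  have hDM : D ≤ M := le_abs_self _
  have htM : t * M < c := by
    rw [htdef]
    rw [div_mul_eq_mul_div, div_lt_iff₀ hden]
    nlinarith
  have hfinal : (1 - t) * ((1 - t) * 0 + t * S) + t * ((1 - t) * S + t * D) < 0 := by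
    have h1 : S = -c := by rw [hcdef]; ring
    rw [h1]
    have h2 : t * D ≤ t * M := mul_le_mul_of_nonneg_left hDM ht0.le
    have h3 : t * (t * D) < t * c :=
      lt_of_le_of_lt (mul_le_mul_of_nonneg_left h2 ht0.le)
        (mul_lt_mul_of_pos_left htM ht0)
    have h4 : 0 ≤ c * t * (1 - 2 * t) :=
      mul_nonneg (mul_nonneg hc.le ht0.le) (by linarith)
    nlinarith [h3, h4]
  linarith
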